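/- Fix a natural number k ≥ 1 and let P_k : ℓ²(ℝ) → ℝ be the continuous 2-homogeneous polynomial P_k(x) = −Σ_{i=1}^{k} x(i)² + Σ_{i=k+1}^{∞} x(i)². For j = 1, …, k let x_j ∈ ℓ² be the vector with x_j(i) = 1 if i = j or i = j + k, and x_j(i) = 0 otherwise. Then M_k = span{x₁, …, x_k} is a k-dimensional P_k-maximal subspace of ℓ²(ℝ); consequently every P_k-maximal subspace is k-dimensional. -/

import Mathlib

open scoped InnerProductSpace

namespace PMaxAux

noncomputable abbrev L : Type := lp (fun _ : ℕ => ℝ) 2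

noncomputable def eps (k i : ℕ) : ℝ := if i < k then -1 else 1

lemma abs_eps (k i : ℕ) : |eps k i| = 1 := by unfold eps; split <;> simp

lemma eps_of_lt {k i : ℕ} (h : i < k) : eps k i = -1 := if_pos h
lemma eps_of_ge {k i : ℕ} (h : k ≤ i) : eps k i = 1 := if_neg (by omega)

lemma single_coe (i j : ℕ) (a : ℝ) :
    (lp.single (E := fun _ : ℕ => ℝ) 2 i a) j = if j = i then a else 0 := by
  rcases eq_or_ne j i with h | h
  · subst h; simp [lp.single_apply_self]
  · simp [lp.single_apply_ne _ _ _ h, h]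

noncomputable def Dop (k : ℕ) (x : L) : L :=
  ⟨fun i => eps k i * x i, by
    apply memℓp_gen
    have hs := (lp.memℓp x).summable (p := 2) (by norm_num)
    apply hs.congr; intro i; simp [abs_mul, abs_eps]⟩

lemma Dop_apply (k : ℕ) (x : L) (i : ℕ) : (Dop k x) i = eps k i * x i := rfl

noncomputable def B (k : ℕ) (x y : L) : ℝ := ⟪Dop k x, y⟫_ℝ

lemma B_eq_tsum (k : ℕ) (x y : L) : B k x y = ∑' i, eps k i * (x i * y i) := by
  rw [B, lp.inner_eq_tsum]
  apply tsum_congr; intro i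
  rw [RCLike.inner_apply, conj_trivial]
  rw [Dop_apply]; ring

lemma summable_B (k : ℕ) (x y : L) : Summable fun i => eps k i * (x i * y i) := by
  have h := lp.summable_inner (𝕜 := ℝ) (Dop k x) y
  apply h.congr; intro i
  rw [RCLike.inner_apply, conj_trivial]
  rw [Dop_apply]; ring

lemma B_symm (k : ℕ) (x y : L) : B k x y = B k y x := by
  rw [B_eq_tsum, B_eq_tsum]; apply tsum_congr; intro i; ring

lemma B_add_right (k : ℕ) (x a b : L) : B k x (a + b) = B k x a + B k x b :=
  inner_add_right _ _ _

lemma B_smul_right (k : ℕ) (x a : L) (c : ℝ) : B k x (c • a) = c * B k x a :=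
  real_inner_smul_right _ _ _

lemma B_add_left (k : ℕ) (x a b : L) : B k (a + b) x = B k a x + B k b x := by
  rw [B_symm, B_add_right, B_symm k x a, B_symm k x b]

lemma B_smul_left (k : ℕ) (x a : L) (c : ℝ) : B k (c • a) x = c * B k a x := by
  rw [B_symm, B_smul_right, B_symm]

lemma B_single_right (k : ℕ) (x : L) (i : ℕ) (a : ℝ) :
    B k x (lp.single 2 i a) = eps k i * x i * a := by
  rw [B, lp.inner_single_right]
  rw [RCLike.inner_apply, conj_trivial]
  rw [Dop_apply]; ring

lemma B_sum_right {ι : Type*} (k : ℕ) (x : L) (s : Finset ι) (f : ι → L) :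
    B k x (∑ i ∈ s, f i) = ∑ i ∈ s, B k x (f i) :=
  inner_sum _ _ _

lemma eq_zero_of_head_zero (k : ℕ) (x : L) (hhead : ∀ i, i < k → x i = 0)
    (hx : B k x x = 0) : x = 0 := by
  have hsum := summable_B k x x
  have hnn : ∀ i, 0 ≤ eps k i * (x i * x i) := by
    intro i
    by_cases h : i < k
    · rw [hhead i h]; simp
    · rw [eps_of_ge (by omega), one_mul]; exact mul_self_nonneg _
  rw [B_eq_tsum] at hx
  have h0 : (fun i => eps k i * (x i * x i)) = 0 := by
    refine (hasSum_zero_iff_of_nonneg (L := SummationFilter.unconditional ℕ) hnn).mp ?_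
    rw [← hx]; exact hsum.hasSum
  rw [lp.eq_zero_iff_coeFn_eq_zero]
  funext i
  have hi0 := congrFun h0 i
  by_cases h : i < k
  · exact hhead i h
  · rw [eps_of_ge (by omega), one_mul] at hi0
    simpa using mul_self_eq_zero.mp hi0

lemma B_vanish_span (k : ℕ) (S : Set L) (hS : ∀ a ∈ S, ∀ b ∈ S, B k a b = 0) :
    ∀ x ∈ Submodule.span ℝ S, ∀ y ∈ Submodule.span ℝ S, B k x y = 0 := by
  have step1 : ∀ b ∈ S, ∀ x ∈ Submodule.span ℝ S, B k x b = 0 := by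
    intro b hb x hx
    induction hx using Submodule.span_induction with
    | mem z hz => exact hS z hz b hb
    | zero => rw [B_symm, B_eq_tsum]; simp
    | add z w _ _ hz hw => rw [B_add_left, hz, hw]; ring
    | smul c z _ hz => rw [B_smul_left, hz]; ring
  intro x hx y hy
  induction hy using Submodule.span_induction with
  | mem z hz => exact step1 z hz x hx
  | zero => rw [B_eq_tsum]; simp
  | add z w _ _ hz hw => rw [B_add_right, hz, hw]; ring
  | smul c z _ hz => rw [B_smul_right, hz]; ring

noncomputable def secMap (n off : ℕ) : L →ₗ[ℝ] EuclideanSpace ℝ (Fin n) where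
  toFun x := WithLp.toLp 2 (fun m => x (off + m))
  map_add' x y := by ext m; simp [lp.coeFn_add]
  map_smul' c x := by ext m; simp [lp.coeFn_smul]

lemma secMap_apply (n off : ℕ) (x : L) (m : Fin n) : secMap n off x m = x (off + m) := rfl

lemma sum_single_coord_eq {n : ℕ} (off : ℕ) (g : Fin n → ℝ) (m : Fin n) :
    (↑(∑ m' : Fin n, lp.single (E := fun _ : ℕ => ℝ) 2 (off + (m' : ℕ)) (g m')) :
      ℕ → ℝ) (off + (m : ℕ)) = g m := by
  rw [lp.coeFn_sum, Finset.sum_apply]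
  rw [Finset.sum_congr rfl (fun (m' : Fin n) _ => single_coe (off + (m' : ℕ)) (off + (m : ℕ)) (g m'))]
  rw [Finset.sum_eq_single m]
  · rw [if_pos rfl]
  · intro m' _ hne
    rw [if_neg]
    intro h
    exact hne (Fin.ext (by omega)).symm
  · intro h; exact absurd (Finset.mem_univ m) h

lemma sum_single_coord_ne {n : ℕ} (off : ℕ) (g : Fin n → ℝ) (i : ℕ)
    (h : ∀ m : Fin n, i ≠ off + (m : ℕ)) :
    (↑(∑ m' : Fin n, lp.single (E := fun _ : ℕ => ℝ) 2 (off + (m' : ℕ)) (g m')) :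
      ℕ → ℝ) i = 0 := by
  rw [lp.coeFn_sum, Finset.sum_apply]
  rw [Finset.sum_congr rfl (fun (m' : Fin n) _ => single_coe (off + (m' : ℕ)) i (g m'))]
  apply Finset.sum_eq_zero
  intro m' _
  rw [if_neg (h m')]

end PMaxAux


/-- `M` is a `P`-maximal subspace: a proper subspace on which `P` vanishes identically
and which is maximal among subspaces on which `P` vanishes. -/
def IsPMaximal {X : Type*} [NormedAddCommGroup X] [NormedSpace ℝ X]
    (P : X → ℝ) (M : Submodule ℝ X) : Prop :=
  M ≠ ⊤ ∧ (∀ x ∈ M, P x = 0) ∧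
    ∀ M₁ : Submodule ℝ X, M ≤ M₁ → (∀ x ∈ M₁, P x = 0) → M₁ = M

/-- For `k ≥ 1`, the 2-homogeneous polynomial `P_k : ℓ²(ℝ) → ℝ`,
`P_k x = -∑_{i<k} x(i)² + ∑_{i≥k} x(i)²`, vanishes on the span `M_k` of the vectors
`x_j = e_j + e_{j+k}` (`j = 0, …, k-1`), `M_k` is a `k`-dimensional `P_k`-maximal subspace,
and every `P_k`-maximal subspace is `k`-dimensional. -/
theorem exampleLtwo_pMaximal (k : ℕ) (hk : 1 ≤ k)
    (P : lp (fun _ : ℕ => ℝ) 2 → ℝ)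
    (hP : ∀ x : lp (fun _ : ℕ => ℝ) 2,
      P x = ∑' i : ℕ, (if i < k then (-1 : ℝ) else 1) * (x i) ^ 2)
    (v : Fin k → lp (fun _ : ℕ => ℝ) 2)
    (hv : ∀ j : Fin k, v j = lp.single 2 (j : ℕ) 1 + lp.single 2 ((j : ℕ) + k) 1) :
    IsPMaximal P (Submodule.span ℝ (Set.range v)) ∧
    Module.finrank ℝ (Submodule.span ℝ (Set.range v)) = k ∧
    ∀ M : Submodule ℝ (lp (fun _ : ℕ => ℝ) 2), IsPMaximal P M →
      FiniteDimensional ℝ M ∧ Module.finrank ℝ M = k := by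
  classical
  have hPB : ∀ x : PMaxAux.L, P x = PMaxAux.B k x x := by
    intro x
    rw [hP, PMaxAux.B_eq_tsum]
    apply tsum_congr; intro i
    show _ = PMaxAux.eps k i * (x i * x i)
    unfold PMaxAux.eps; ring
  have hvco : ∀ (j : Fin k) (i : ℕ),
      (v j : ℕ → ℝ) i = (if i = (j : ℕ) then (1:ℝ) else 0)
        + (if i = (j : ℕ) + k then 1 else 0) := by
    intro j i
    rw [hv j]
    rw [congrFun (lp.coeFn_add (lp.single (E := fun _ : ℕ => ℝ) 2 (j:ℕ) (1:ℝ)) (lp.single (E := fun _ : ℕ => ℝ) 2 ((j:ℕ)+k) (1:ℝ))) i]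
    rw [Pi.add_apply, PMaxAux.single_coe, PMaxAux.single_coe]
  have hBvv : ∀ i j : Fin k, PMaxAux.B k (v i) (v j) = 0 := by
    intro i j
    have hik := i.isLt; have hjk := j.isLt
    rw [hv j, PMaxAux.B_add_right, PMaxAux.B_single_right, PMaxAux.B_single_right,
      PMaxAux.eps_of_lt hjk, PMaxAux.eps_of_ge (Nat.le_add_left k (j:ℕ)),
      hvco i (j:ℕ), hvco i ((j:ℕ)+k)]
    have h1 : ¬((j:ℕ) = (i:ℕ)+k) := by omega
    have h2 : ¬((j:ℕ)+k = (i:ℕ)) := by omega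
    rw [if_neg h1, if_neg h2]
    by_cases hij : (j:ℕ) = (i:ℕ)
    · rw [if_pos hij, if_pos (by omega)]; ring
    · rw [if_neg hij, if_neg (by omega)]; ring
  have hvanM : ∀ x ∈ Submodule.span ℝ (Set.range v), P x = 0 := by
    intro x hx
    rw [hPB]
    refine PMaxAux.B_vanish_span k _ ?_ x hx x hx
    rintro a ⟨i, rfl⟩ b ⟨j, rfl⟩
    exact hBvv i j
  have hxcoord : ∀ (y : PMaxAux.L) (i : ℕ), i < k →
      ((∑ j : Fin k, (y (j:ℕ)) • v j : PMaxAux.L) : ℕ → ℝ) i = y i := by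
    intro y i hi
    rw [congrFun (lp.coeFn_sum (fun j : Fin k => (y (j:ℕ)) • v j) Finset.univ) i,
      Finset.sum_apply]
    have hterm : ∀ j ∈ Finset.univ, (((y ((j : Fin k):ℕ)) • v j : PMaxAux.L) : ℕ → ℝ) i
        = if (⟨i, hi⟩ : Fin k) = j then y i else 0 := by
      intro j _
      rw [congrFun (lp.coeFn_smul (y ((j:Fin k):ℕ)) (v j)) i, Pi.smul_apply, hvco j i]
      have h2 : ¬(i = (j:ℕ)+k) := by omega
      rw [if_neg h2, add_zero]
      by_cases hij : (⟨i, hi⟩ : Fin k) = j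
      · have hval : i = (j:ℕ) := by rw [← hij]
        rw [if_pos hval, if_pos hij, ← hval]; simp
      · have hvalne : ¬ (i = (j:ℕ)) := fun h => hij (Fin.ext h)
        rw [if_neg hvalne, if_neg hij]; simp
    rw [Finset.sum_congr rfl hterm, Finset.sum_ite_eq]
    simp
  have hmaxM : IsPMaximal P (Submodule.span ℝ (Set.range v)) := by
    refine ⟨?_, hvanM, ?_⟩
    · intro htop
      have h1 : P (lp.single 2 k (1:ℝ)) = 0 := hvanM _ (htop ▸ Submodule.mem_top)
      rw [hPB, PMaxAux.B_single_right, PMaxAux.eps_of_ge le_rfl, PMaxAux.single_coe] at h1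
      simp at h1
    · intro M₁ hle hvan₁
      refine le_antisymm ?_ hle
      intro y hy
      have hxM : (∑ j : Fin k, (y (j:ℕ)) • v j) ∈ Submodule.span ℝ (Set.range v) :=
        Submodule.sum_mem _ fun j _ =>
          Submodule.smul_mem _ _ (Submodule.subset_span ⟨j, rfl⟩)
      have hzM₁ : y - ∑ j : Fin k, (y (j:ℕ)) • v j ∈ M₁ := M₁.sub_mem hy (hle hxM)
      have hz0 : y - ∑ j : Fin k, (y (j:ℕ)) • v j = 0 := by
        refine PMaxAux.eq_zero_of_head_zero k _ ?_ ?_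
        · intro i hi
          rw [congrFun (lp.coeFn_sub y _) i, Pi.sub_apply, hxcoord y i hi, sub_self]
        · rw [← hPB]; exact hvan₁ _ hzM₁
      have hyx : y = ∑ j : Fin k, (y (j:ℕ)) • v j := by rwa [sub_eq_zero] at hz0
      rw [hyx]; exact hxM
  have hcomp : ⇑(PMaxAux.secMap k 0) ∘ v = fun j : Fin k => EuclideanSpace.single j (1:ℝ) := by
    funext j
    refine PiLp.ext fun m => ?_
    have hmk := m.isLt
    rw [Function.comp_apply]
    rw [show (PMaxAux.secMap k 0) (v j) m = (v j : ℕ → ℝ) (0 + (m:ℕ)) from rfl]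
    rw [hvco, EuclideanSpace.single_apply]
    have h2 : ¬((0 + (m:ℕ)) = (j:ℕ)+k) := by omega
    rw [if_neg h2, add_zero]
    by_cases hmj : m = j
    · rw [if_pos (by simp [hmj]), if_pos hmj]
    · rw [if_neg (by simpa [Fin.ext_iff] using hmj), if_neg hmj]
  have hli : LinearIndependent ℝ v := by
    apply LinearIndependent.of_comp (PMaxAux.secMap k 0)
    rw [hcomp]
    have h1 := (EuclideanSpace.basisFun (Fin k) ℝ).toBasis.linearIndependent
    have h2 : ⇑(EuclideanSpace.basisFun (Fin k) ℝ).toBasis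
        = fun j : Fin k => EuclideanSpace.single j (1:ℝ) := by
      funext j; rw [OrthonormalBasis.coe_toBasis, EuclideanSpace.basisFun_apply]
    rwa [h2] at h1
  have hfrk : Module.finrank ℝ (Submodule.span ℝ (Set.range v)) = k := by
    rw [finrank_span_eq_card hli, Fintype.card_fin]
  refine ⟨hmaxM, hfrk, ?_⟩
  intro M₀ hM₀
  obtain ⟨hMtop, hMvan, hMmax⟩ := hM₀
  have hBM : ∀ x ∈ M₀, ∀ z ∈ M₀, PMaxAux.B k x z = 0 := by
    intro x hx z hz
    have h1 := hMvan (x + z) (M₀.add_mem hx hz)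
    have h2 := hMvan x hx
    have h3 := hMvan z hz
    rw [hPB] at h1 h2 h3
    rw [PMaxAux.B_add_left, PMaxAux.B_add_right, PMaxAux.B_add_right] at h1
    have h4 := PMaxAux.B_symm k x z
    linarith
  have hker : ∀ z : M₀, (PMaxAux.secMap k 0) (z : PMaxAux.L) = 0 → z = 0 := by
    intro z hz
    have hh : ∀ i, i < k → (z : PMaxAux.L) i = 0 := by
      intro i hi
      have h := congrFun (congrArg WithLp.ofLp hz) ⟨i, hi⟩
      rw [show ((0 : EuclideanSpace ℝ (Fin k)) ⟨i, hi⟩) = 0 from rfl] at h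
      rw [show (PMaxAux.secMap k 0) (z : PMaxAux.L) ⟨i, hi⟩
        = (z : PMaxAux.L) (0 + i) from rfl] at h
      rwa [Nat.zero_add] at h
    have h0 := PMaxAux.eq_zero_of_head_zero k _ hh (hBM z z.2 z z.2)
    exact Subtype.ext h0
  have hinj : Function.Injective ((PMaxAux.secMap k 0) ∘ₗ M₀.subtype) := by
    rw [← LinearMap.ker_eq_bot, LinearMap.ker_eq_bot']
    intro m hm
    exact hker m hm
  have hfd : FiniteDimensional ℝ M₀ := FiniteDimensional.of_injective _ hinj
  have hle : Module.finrank ℝ M₀ ≤ k := by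
    have h := LinearMap.finrank_le_finrank_of_injective hinj
    rwa [finrank_euclideanSpace, Fintype.card_fin] at h
  refine ⟨hfd, ?_⟩
  by_contra hne
  have hlt : Module.finrank ℝ M₀ < k := lt_of_le_of_ne hle hne
  set d := Module.finrank ℝ M₀ with hd
  have hNlt : Module.finrank ℝ (Submodule.map (PMaxAux.secMap k 0) M₀) < k :=
    lt_of_le_of_lt (Submodule.finrank_map_le _ _) hlt
  have hNne : (Submodule.map (PMaxAux.secMap k 0) M₀) ≠ ⊤ := by
    intro h; rw [h, finrank_top, finrank_euclideanSpace, Fintype.card_fin] at hNlt; omega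
  have hNob : (Submodule.map (PMaxAux.secMap k 0) M₀)ᗮ ≠ ⊥ :=
    fun h => hNne (Submodule.orthogonal_eq_bot_iff.mp h)
  obtain ⟨u, huN, hu0⟩ := (Submodule.ne_bot_iff _).mp hNob
  have hWlt : Module.finrank ℝ (Submodule.map (PMaxAux.secMap (d+1) k) M₀) < d + 1 :=
    lt_of_le_of_lt (Submodule.finrank_map_le _ _) (Nat.lt_succ_self _)
  have hWne : (Submodule.map (PMaxAux.secMap (d+1) k) M₀) ≠ ⊤ := by
    intro h; rw [h, finrank_top, finrank_euclideanSpace, Fintype.card_fin] at hWlt; omega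
  have hWob : (Submodule.map (PMaxAux.secMap (d+1) k) M₀)ᗮ ≠ ⊥ :=
    fun h => hWne (Submodule.orthogonal_eq_bot_iff.mp h)
  obtain ⟨w₀, hwW, hw0⟩ := (Submodule.ne_bot_iff _).mp hWob
  set w : EuclideanSpace ℝ (Fin (d+1)) := (‖u‖ / ‖w₀‖) • w₀ with hwdef
  have hwW' : w ∈ (Submodule.map (PMaxAux.secMap (d+1) k) M₀)ᗮ :=
    Submodule.smul_mem _ _ hwW
  have hnw : ‖w‖ = ‖u‖ := by
    rw [hwdef, norm_smul, Real.norm_eq_abs, abs_div, abs_norm, abs_norm,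
      div_mul_cancel₀]
    exact norm_ne_zero_iff.mpr hw0
  set y : PMaxAux.L := (∑ j : Fin k, lp.single 2 (0 + (j:ℕ)) (u j))
    + ∑ m : Fin (d+1), lp.single 2 (k + (m:ℕ)) (w m) with hydef
  have hBxy : ∀ x : PMaxAux.L, PMaxAux.B k x y =
      -(⟪(PMaxAux.secMap k 0) x, u⟫_ℝ) + ⟪(PMaxAux.secMap (d+1) k) x, w⟫_ℝ := by
    intro x
    rw [hydef, PMaxAux.B_add_right, PMaxAux.B_sum_right, PMaxAux.B_sum_right]
    have hA : ∑ j : Fin k, PMaxAux.B k x (lp.single 2 (0 + (j:ℕ)) (u j))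
        = ∑ j : Fin k, -(x (0 + (j:ℕ)) * u j) := by
      refine Finset.sum_congr rfl fun j _ => ?_
      rw [PMaxAux.B_single_right, PMaxAux.eps_of_lt (by have := j.isLt; omega)]; ring
    have hB2 : ∑ m : Fin (d+1), PMaxAux.B k x (lp.single 2 (k + (m:ℕ)) (w m))
        = ∑ m : Fin (d+1), x (k + (m:ℕ)) * w m := by
      refine Finset.sum_congr rfl fun m _ => ?_
      rw [PMaxAux.B_single_right, PMaxAux.eps_of_ge (Nat.le_add_right k m)]; ring
    have hiu : ⟪(PMaxAux.secMap k 0) x, u⟫_ℝ = ∑ j : Fin k, x (0 + (j:ℕ)) * u j := by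
      rw [PiLp.inner_apply]
      refine Finset.sum_congr rfl fun j _ => ?_
      rw [RCLike.inner_apply, PMaxAux.secMap_apply]
      simp
      ring
    have hiw : ⟪(PMaxAux.secMap (d+1) k) x, w⟫_ℝ
        = ∑ m : Fin (d+1), x (k + (m:ℕ)) * w m := by
      rw [PiLp.inner_apply]
      refine Finset.sum_congr rfl fun m _ => ?_
      rw [RCLike.inner_apply, PMaxAux.secMap_apply]
      simp
      ring
    rw [hA, hB2, hiu, hiw, ← Finset.sum_neg_distrib]
  have hyM : ∀ x ∈ M₀, PMaxAux.B k x y = 0 := by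
    intro x hx
    rw [hBxy]
    have h1 : ⟪(PMaxAux.secMap k 0) x, u⟫_ℝ = 0 :=
      (Submodule.mem_orthogonal _ _).mp huN _ ⟨x, hx, rfl⟩
    have h2 : ⟪(PMaxAux.secMap (d+1) k) x, w⟫_ℝ = 0 :=
      (Submodule.mem_orthogonal _ _).mp hwW' _ ⟨x, hx, rfl⟩
    rw [h1, h2]; ring
  have hysec1 : (PMaxAux.secMap k 0) y = u := by
    ext j
    rw [PMaxAux.secMap_apply, hydef]
    rw [congrFun (lp.coeFn_add _ _) (0 + (j:ℕ)), Pi.add_apply]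
    rw [PMaxAux.sum_single_coord_eq 0 (fun j' : Fin k => u j') j]
    rw [PMaxAux.sum_single_coord_ne k (fun m : Fin (d+1) => w m) (0 + (j:ℕ))
      (fun m => by have := j.isLt; omega)]
    rw [add_zero]
  have hysec2 : (PMaxAux.secMap (d+1) k) y = w := by
    ext m
    rw [PMaxAux.secMap_apply, hydef]
    rw [congrFun (lp.coeFn_add _ _) (k + (m:ℕ)), Pi.add_apply]
    rw [PMaxAux.sum_single_coord_eq k (fun m' : Fin (d+1) => w m') m]
    rw [PMaxAux.sum_single_coord_ne 0 (fun j : Fin k => u j) (k + (m:ℕ))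
      (fun j => by have := j.isLt; omega)]
    rw [zero_add]
  have hByy : PMaxAux.B k y y = 0 := by
    rw [hBxy y, hysec1, hysec2]
    rw [real_inner_self_eq_norm_sq, real_inner_self_eq_norm_sq, hnw]; ring
  have hvan₁ : ∀ z ∈ M₀ ⊔ (Submodule.span ℝ {y}), P z = 0 := by
    intro z hz
    obtain ⟨x, hx, y', hy', rfl⟩ := Submodule.mem_sup.mp hz
    obtain ⟨c, rfl⟩ := Submodule.mem_span_singleton.mp hy'
    rw [hPB]
    simp only [PMaxAux.B_add_left, PMaxAux.B_add_right, PMaxAux.B_smul_left,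
      PMaxAux.B_smul_right]
    rw [hBM x hx x hx, hyM x hx, hByy, PMaxAux.B_symm k y x, hyM x hx]
    ring
  have heq := hMmax _ le_sup_left hvan₁
  have hyM₀ : y ∈ M₀ := by
    rw [← heq]
    exact Submodule.mem_sup_right (Submodule.mem_span_singleton_self y)
  have huN' : u ∈ Submodule.map (PMaxAux.secMap k 0) M₀ := ⟨y, hyM₀, hysec1⟩
  have hinner : ⟪u, u⟫_ℝ = 0 := (Submodule.mem_orthogonal _ _).mp huN _ huN'
  exact hu0 (inner_self_eq_zero.mp hinner)
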